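/- If G(x) = P(x̂) + P_⊥(x̂)G(x)P_⊥(x̂) for all x ≠ 0 and G is continuous at 0, then G(0) = I (the identity matrix). -/

import Mathlib

/-- The rank-one projection `P(x̂) = |x̂⟩⟨x̂|` as a matrix: entries `x_i x_j / |x|²`. -/
noncomputable def projMat (d : ℕ) (x : Fin d → ℝ) : Matrix (Fin d) (Fin d) ℝ :=
  Matrix.of fun i j => x i * x j / (∑ k, x k ^ 2)

/-- If `G(x) = P(x̂) + P_⊥(x̂) G(x) P_⊥(x̂)` for all `x ≠ 0` and `G` is continuous, then
`G(0) = I`. -/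
theorem stmt_10 (d : ℕ)
    (G : (Fin d → ℝ) → Matrix (Fin d) (Fin d) ℝ)
    (hGcont : ∀ i j, Continuous fun z => G z i j)
    (hdec : ∀ x : Fin d → ℝ, x ≠ 0 →
      G x = projMat d x + (1 - projMat d x) * G x * (1 - projMat d x)) :
    G 0 = 1 := by
  ext i j
  set v : Fin d → ℝ := Pi.single i 1 with hv
  have hf : Continuous fun t : ℝ => G (t • v) i j :=
    (hGcont i j).comp (continuous_id.smul continuous_const)
  have key : ∀ t : ℝ, t ≠ 0 → G (t • v) i j = (1 : Matrix (Fin d) (Fin d) ℝ) i j := by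
    intro t ht
    have hx : (t • v) ≠ 0 := by
      intro h
      have := congrFun h i
      simp [hv, Pi.single_apply] at this
      exact ht this
    have hsum : (∑ k, (t • v) k ^ 2) = t ^ 2 := by
      simp [hv, Pi.single_apply, mul_pow, apply_ite (fun y : ℝ => y ^ 2)]
    have hProw : ∀ k, projMat d (t • v) i k = (if k = i then (1:ℝ) else 0) := by
      intro k
      rcases eq_or_ne k i with h | h
      · subst h
        simp only [projMat, Matrix.of_apply, hsum, hv, Pi.smul_apply, Pi.single_apply,
          if_pos rfl, smul_eq_mul, mul_one, if_true]
        field_simp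
        simp [ite_pow, Finset.sum_ite_eq']
      · simp [projMat, hsum, hv, Pi.single_apply, h]
    have hrow : ∀ k, ((1 : Matrix (Fin d) (Fin d) ℝ) - projMat d (t • v)) i k = 0 := by
      intro k
      rw [Matrix.sub_apply, hProw k, Matrix.one_apply]
      rcases eq_or_ne k i with h | h
      · simp [h]
      · simp [h, Ne.symm h]
    have hmul : ((1 - projMat d (t • v)) * G (t • v) * (1 - projMat d (t • v))) i j = 0 := by
      rw [Matrix.mul_apply]
      apply Finset.sum_eq_zero
      intro b _
      rw [Matrix.mul_apply]
      rw [Finset.sum_eq_zero]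
      · ring
      · intro a _
        rw [hrow a, zero_mul]
    have := congrFun (congrFun (hdec _ hx) i) j
    rw [Matrix.add_apply, hmul, add_zero, hProw j] at this
    rw [this, Matrix.one_apply]
    by_cases h : j = i
    · simp [h]
    · simp [h, Ne.symm h]
  have heq : (fun t : ℝ => G (t • v) i j) = fun _ => (1 : Matrix (Fin d) (Fin d) ℝ) i j :=
    Continuous.ext_on (dense_compl_singleton (0:ℝ)) hf continuous_const
      (fun t ht => key t ht)
  have h0 := congrFun heq 0
  simpa using h0
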